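/- Dropping auxiliary parameters from implicit definitions: assume Craig interpolation for Δ0 formulas holds (for classically valid entailments). If a Δ0 formula Σ(o_in, o_out, ā) implicitly defines o_out as a function of o_in (i.e., Σ(o_in,o_out,ā) ∧ Σ(o_in,o_out',ā') entails o_out = o_out'), then there exists a Δ0 formula Σ'(o_in, o_out) with no auxiliary variables such that Σ(o_in,o_out,ā) entails Σ'(o_in,o_out), and Σ' implicitly defines o_out as a function of o_in (Σ'(o_in,o_out) ∧ Σ'(o_in,o_out') entails o_out = o_out'). -/

import Mathlib

/-- Nested relational types. -/
inductive NType : Type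
  | U : NType
  | unit : NType
  | prod : NType → NType → NType
  | set : NType → NType

/-- Objects of a nested relational type over a set `α` of Ur-elements. -/
def Obj (α : Type) : NType → Type
  | .U => α
  | .unit => Unit
  | .prod a b => Obj α a × Obj α b
  | .set t => Set (Obj α t)

/-- Typed de Bruijn variables over a context of types. -/
inductive Var : List NType → NType → Type
  | zero {Γ t} : Var (t :: Γ) t
  | succ {Γ s t} : Var Γ t → Var (s :: Γ) t

/-- Environments: assignments of objects to all variables of a context. -/
def Env (α : Type) (Γ : List NType) : Type := ∀ t, Var Γ t → Obj α t

def Env.nil {α : Type} : Env α [] := fun _ v => nomatch v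

def Env.cons {α : Type} {Γ : List NType} {t : NType} (x : Obj α t) (ρ : Env α Γ) :
    Env α (t :: Γ) := fun s v =>
  match v with
  | .zero => x
  | .succ w => ρ s w

/-- Terms: variables, unit, tupling and projections. -/
inductive Tm : List NType → NType → Type
  | var {Γ t} : Var Γ t → Tm Γ t
  | unit {Γ} : Tm Γ .unit
  | pair {Γ a b} : Tm Γ a → Tm Γ b → Tm Γ (.prod a b)
  | fst {Γ a b} : Tm Γ (.prod a b) → Tm Γ a
  | snd {Γ a b} : Tm Γ (.prod a b) → Tm Γ b

def Tm.eval {α : Type} {Γ : List NType} (ρ : Env α Γ) : ∀ {t}, Tm Γ t → Obj α t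
  | _, .var v => ρ _ v
  | _, .unit => (() : Unit)
  | _, .pair a b => ((Tm.eval ρ a, Tm.eval ρ b) : _ × _)
  | _, .fst (a := a) (b := b) p => (Tm.eval ρ p : Obj α a × Obj α b).1
  | _, .snd (a := a) (b := b) p => (Tm.eval ρ p : Obj α a × Obj α b).2

/-- Δ₀ formulas: (dis)equality of Ur-elements, ⊤, ⊥, ∧, ∨ and bounded quantifiers. -/
inductive Delta0 : List NType → Type
  | eqU {Γ} : Tm Γ .U → Tm Γ .U → Delta0 Γ
  | neU {Γ} : Tm Γ .U → Tm Γ .U → Delta0 Γ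
  | tru {Γ} : Delta0 Γ
  | fls {Γ} : Delta0 Γ
  | and {Γ} : Delta0 Γ → Delta0 Γ → Delta0 Γ
  | or {Γ} : Delta0 Γ → Delta0 Γ → Delta0 Γ
  | all {Γ t} : Tm Γ (.set t) → Delta0 (t :: Γ) → Delta0 Γ
  | ex {Γ t} : Tm Γ (.set t) → Delta0 (t :: Γ) → Delta0 Γ

/-- Satisfaction of a Δ₀ formula in an environment. -/
def Delta0.sat {α : Type} : ∀ {Γ}, Env α Γ → Delta0 Γ → Prop
  | _, ρ, .eqU a b => Tm.eval ρ a = Tm.eval ρ b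
  | _, ρ, .neU a b => Tm.eval ρ a ≠ Tm.eval ρ b
  | _, _, .tru => True
  | _, _, .fls => False
  | _, ρ, .and φ ψ => Delta0.sat ρ φ ∧ Delta0.sat ρ ψ
  | _, ρ, .or φ ψ => Delta0.sat ρ φ ∨ Delta0.sat ρ ψ
  | _, ρ, .all (t := T) s φ =>
      ∀ x : Obj _ T, x ∈ (show Set (Obj _ T) from Tm.eval ρ s) → Delta0.sat (Env.cons x ρ) φ
  | _, ρ, .ex (t := T) s φ =>
      ∃ x : Obj _ T, x ∈ (show Set (Obj _ T) from Tm.eval ρ s) ∧ Delta0.sat (Env.cons x ρ) φ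

/-- Nested relational calculus expressions. -/
inductive NRC : List NType → NType → Type
  | var {Γ t} : Var Γ t → NRC Γ t
  | unit {Γ} : NRC Γ .unit
  | pair {Γ a b} : NRC Γ a → NRC Γ b → NRC Γ (.prod a b)
  | fst {Γ a b} : NRC Γ (.prod a b) → NRC Γ a
  | snd {Γ a b} : NRC Γ (.prod a b) → NRC Γ b
  | sing {Γ t} : NRC Γ t → NRC Γ (.set t)
  | empty {Γ t} : NRC Γ (.set t)
  | union {Γ t} : NRC Γ (.set t) → NRC Γ (.set t) → NRC Γ (.set t)
  | diff {Γ t} : NRC Γ (.set t) → NRC Γ (.set t) → NRC Γ (.set t)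
  | bigUnion {Γ a b} : NRC (a :: Γ) (.set b) → NRC Γ (.set a) → NRC Γ (.set b)

/-- Semantics of NRC expressions. -/
def NRC.eval {α : Type} : ∀ {Γ}, Env α Γ → ∀ {t}, NRC Γ t → Obj α t
  | _, ρ, _, .var v => ρ _ v
  | _, _, _, .unit => (() : Unit)
  | _, ρ, _, .pair a b => ((NRC.eval ρ a, NRC.eval ρ b) : _ × _)
  | _, ρ, _, .fst (a := a) (b := b) p => (NRC.eval ρ p : Obj α a × Obj α b).1
  | _, ρ, _, .snd (a := a) (b := b) p => (NRC.eval ρ p : Obj α a × Obj α b).2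
  | _, ρ, _, .sing e => ({NRC.eval ρ e} : Set _)
  | _, _, _, .empty => (∅ : Set _)
  | _, ρ, _, .union e1 e2 => ((NRC.eval ρ e1 : Set _) ∪ (NRC.eval ρ e2 : Set _) : Set _)
  | _, ρ, _, .diff e1 e2 => ((NRC.eval ρ e1 : Set _) \ (NRC.eval ρ e2 : Set _) : Set _)
  | _, ρ, _, .bigUnion (a := a) (b := b) e2 e1 =>
      show Set (Obj α b) from
        ⋃ x ∈ (show Set (Obj α a) from NRC.eval ρ e1),
          (show Set (Obj α b) from NRC.eval (Env.cons x ρ) e2)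

/-- The Boolean type `Set(Unit)`. -/
abbrev NType.bool : NType := .set .unit

def Tm.fv {Γ : List NType} : ∀ {t}, Tm Γ t → Set ((s : NType) × Var Γ s)
  | _, .var v => {⟨_, v⟩}
  | _, .unit => ∅
  | _, .pair a b => a.fv ∪ b.fv
  | _, .fst p => p.fv
  | _, .snd p => p.fv

/-- Remove the topmost (bound) variable from a set of variables. -/
def dropFv {Γ : List NType} {a : NType} (S : Set ((s : NType) × Var (a :: Γ) s)) :
    Set ((s : NType) × Var Γ s) :=
  {v | (⟨v.1, .succ v.2⟩ : (s : NType) × Var (a :: Γ) s) ∈ S}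

/-- Free variables of a Δ₀ formula. -/
def Delta0.fv : ∀ {Γ : List NType}, Delta0 Γ → Set ((s : NType) × Var Γ s)
  | _, .eqU a b => a.fv ∪ b.fv
  | _, .neU a b => a.fv ∪ b.fv
  | _, .tru => ∅
  | _, .fls => ∅
  | _, .and φ ψ => φ.fv ∪ ψ.fv
  | _, .or φ ψ => φ.fv ∪ ψ.fv
  | _, .all s φ => s.fv ∪ dropFv φ.fv
  | _, .ex s φ => s.fv ∪ dropFv φ.fv

section Aux

/-- Numeric index of a de Bruijn variable. -/
def Var.idx : ∀ {Γ t}, Var Γ t → Nat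
  | _, _, .zero => 0
  | _, _, .succ v => v.idx + 1

theorem sigma_eq_idx {Γ} {t s : NType} {v : Var Γ t} {w : Var Γ s}
    (h : (⟨t, v⟩ : (r : NType) × Var Γ r) = ⟨s, w⟩) : v.idx = w.idx := by
  injection h with h1 h2
  subst h1
  exact congrArg Var.idx (eq_of_heq h2)

/-- Total renamings between contexts. -/
def Ren (Γ Γ' : List NType) := ∀ t, Var Γ t → Var Γ' t

def Ren.lift {Γ Γ' : List NType} {a : NType} (f : Ren Γ Γ') : Ren (a :: Γ) (a :: Γ')
  | _, .zero => .zero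
  | _, .succ v => .succ (f _ v)

def Tm.ren {Γ Γ'} (f : Ren Γ Γ') : ∀ {t}, Tm Γ t → Tm Γ' t
  | _, .var v => .var (f _ v)
  | _, .unit => .unit
  | _, .pair a b => .pair (a.ren f) (b.ren f)
  | _, .fst p => .fst (p.ren f)
  | _, .snd p => .snd (p.ren f)

def Delta0.ren {Γ Γ'} (f : Ren Γ Γ') : Delta0 Γ → Delta0 Γ'
  | .eqU a b => .eqU (a.ren f) (b.ren f)
  | .neU a b => .neU (a.ren f) (b.ren f)
  | .tru => .tru
  | .fls => .fls
  | .and φ ψ => .and (φ.ren f) (ψ.ren f)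
  | .or φ ψ => .or (φ.ren f) (ψ.ren f)
  | .all s φ => .all (s.ren f) (φ.ren f.lift)
  | .ex s φ => .ex (s.ren f) (φ.ren f.lift)

def Env.comp {α Γ Γ'} (ρ : Env α Γ') (f : Ren Γ Γ') : Env α Γ := fun t v => ρ t (f t v)

theorem Env.comp_lift {α Γ Γ'} {a : NType} (ρ : Env α Γ') (f : Ren Γ Γ') (x : Obj α a) :
    (Env.cons x ρ).comp f.lift = Env.cons x (ρ.comp f) := by
  funext t v; cases v <;> rfl

theorem Tm.eval_ren {α Γ Γ'} (f : Ren Γ Γ') (ρ : Env α Γ') : ∀ {t} (a : Tm Γ t),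
    (a.ren f).eval ρ = a.eval (ρ.comp f)
  | _, .var v => rfl
  | _, .unit => rfl
  | _, .pair a b => by simp [Tm.ren, Tm.eval, eval_ren f ρ a, eval_ren f ρ b]; rfl
  | _, .fst p => by simp [Tm.ren, Tm.eval, eval_ren f ρ p]
  | _, .snd p => by simp [Tm.ren, Tm.eval, eval_ren f ρ p]

theorem Delta0.sat_ren {α} : ∀ {Γ Γ'} (f : Ren Γ Γ') (ρ : Env α Γ') (φ : Delta0 Γ),
    (φ.ren f).sat ρ ↔ φ.sat (ρ.comp f)
  | _, _, f, ρ, .eqU a b => by simp [ren, sat, Tm.eval_ren]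
  | _, _, f, ρ, .neU a b => by simp [ren, sat, Tm.eval_ren]
  | _, _, f, ρ, .tru => Iff.rfl
  | _, _, f, ρ, .fls => Iff.rfl
  | _, _, f, ρ, .and φ ψ => by
      simp only [ren, sat, sat_ren f ρ φ, sat_ren f ρ ψ]
  | _, _, f, ρ, .or φ ψ => by
      simp only [ren, sat, sat_ren f ρ φ, sat_ren f ρ ψ]
  | _, _, f, ρ, .all s φ => by
      simp only [ren, sat, Tm.eval_ren]
      refine forall_congr' fun x => imp_congr Iff.rfl ?_
      rw [sat_ren f.lift (Env.cons x ρ) φ, Env.comp_lift]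
  | _, _, f, ρ, .ex s φ => by
      simp only [ren, sat, Tm.eval_ren]
      refine exists_congr fun x => and_congr Iff.rfl ?_
      rw [sat_ren f.lift (Env.cons x ρ) φ, Env.comp_lift]

end Aux
section Aux2

def Delta0.neg : ∀ {Γ}, Delta0 Γ → Delta0 Γ
  | _, .eqU a b => .neU a b
  | _, .neU a b => .eqU a b
  | _, .tru => .fls
  | _, .fls => .tru
  | _, .and φ ψ => .or φ.neg ψ.neg
  | _, .or φ ψ => .and φ.neg ψ.neg
  | _, .all s φ => .ex s φ.neg
  | _, .ex s φ => .all s φ.neg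

theorem Delta0.sat_neg {α} : ∀ {Γ} (ρ : Env α Γ) (φ : Delta0 Γ), φ.neg.sat ρ ↔ ¬ φ.sat ρ
  | _, ρ, .eqU a b => Iff.rfl
  | _, ρ, .neU a b => by simp [neg, sat]
  | _, ρ, .tru => by simp [neg, sat]
  | _, ρ, .fls => by simp [neg, sat]
  | _, ρ, .and φ ψ => by
      simp only [neg, sat, sat_neg ρ φ, sat_neg ρ ψ]
      tauto
  | _, ρ, .or φ ψ => by
      simp only [neg, sat, sat_neg ρ φ, sat_neg ρ ψ]
      tauto
  | _, ρ, .all s φ => by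
      simp only [neg, sat]
      constructor
      · rintro ⟨x, hx, h⟩ hall
        exact (sat_neg (Env.cons x ρ) φ).mp h (hall x hx)
      · intro h
        by_contra hc
        push_neg at hc
        refine h fun x hx => ?_
        by_contra h2
        exact hc x hx ((sat_neg (Env.cons x ρ) φ).mpr h2)
  | _, ρ, .ex s φ => by
      simp only [neg, sat]
      exact ⟨fun h ⟨x, hx, hs⟩ => (sat_neg (Env.cons x ρ) φ).mp (h x hx) hs,
        fun h x hx => (sat_neg (Env.cons x ρ) φ).mpr fun hs => h ⟨x, hx, hs⟩⟩

/-- Δ₀-definable equality at every type. -/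
def eqT : ∀ (t : NType) {Γ}, Tm Γ t → Tm Γ t → Delta0 Γ
  | .U, _, a, b => .eqU a b
  | .unit, _, _, _ => .tru
  | .prod s t, _, a, b => .and (eqT s (.fst a) (.fst b)) (eqT t (.snd a) (.snd b))
  | .set t, _, a, b =>
      .and (.all a (.ex (b.ren fun _ v => .succ v) (eqT t (.var (.succ .zero)) (.var .zero))))
           (.all b (.ex (a.ren fun _ v => .succ v) (eqT t (.var (.succ .zero)) (.var .zero))))

theorem comp_succ {α Γ} {a : NType} (x : Obj α a) (ρ : Env α Γ) :
    (Env.cons x ρ).comp (fun _ v => Var.succ v) = ρ := rfl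

theorem sat_eqT {α} : ∀ (t : NType) {Γ} (ρ : Env α Γ) (a b : Tm Γ t),
    (eqT t a b).sat ρ ↔ a.eval ρ = b.eval ρ
  | .U, _, ρ, a, b => Iff.rfl
  | .unit, _, ρ, a, b =>
      iff_of_true trivial (Subsingleton.elim (α := Unit) _ _)
  | .prod s t, _, ρ, a, b => by
      simp only [eqT, Delta0.sat, sat_eqT s ρ (.fst a) (.fst b), sat_eqT t ρ (.snd a) (.snd b),
        Tm.eval]
      exact (Prod.ext_iff).symm
  | .set t, _, ρ, a, b => by
      simp only [eqT, Delta0.sat]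
      have key : ∀ (c d : Tm _ (.set t)),
          (∀ x, x ∈ (show Set (Obj α t) from c.eval ρ) →
            ∃ y, y ∈ (show Set (Obj α t) from Tm.eval (Env.cons x ρ) (d.ren fun _ v => .succ v)) ∧
              (eqT t (.var (.succ .zero)) (.var .zero)).sat (Env.cons y (Env.cons x ρ))) ↔
          (show Set (Obj α t) from c.eval ρ) ⊆ (show Set (Obj α t) from d.eval ρ) := by
        intro c d
        constructor
        · intro h x hx
          obtain ⟨y, hy, hxy⟩ := h x hx
          dsimp only at hy
          erw [Tm.eval_ren, comp_succ] at hy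
          rw [sat_eqT t (Env.cons y (Env.cons x ρ)) (.var (.succ .zero)) (.var .zero)] at hxy
          exact (show x = y from hxy) ▸ hy
        · intro h x hx
          refine ⟨x, ?_, ?_⟩
          · dsimp only; erw [Tm.eval_ren, comp_succ]; exact h hx
          · rw [sat_eqT t (Env.cons x (Env.cons x ρ)) (.var (.succ .zero)) (.var .zero)]
            rfl
      rw [key a b, key b a]
      exact ⟨fun ⟨h1, h2⟩ => Set.Subset.antisymm h1 h2, fun h => by constructor <;> rw [h]⟩

end Aux2
section Aux3

theorem Tm.fv_ren {Γ Γ'} (f : Ren Γ Γ') : ∀ {t} (a : Tm Γ t) (p : (s : NType) × Var Γ' s),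
    p ∈ (a.ren f).fv → ∃ q, q ∈ a.fv ∧ p = ⟨q.1, f q.1 q.2⟩
  | _, .var v, p, hp => ⟨⟨_, v⟩, rfl, hp⟩
  | _, .unit, p, hp => absurd hp (Set.notMem_empty p)
  | _, .pair a b, p, hp => by
      rcases hp with hp | hp
      · obtain ⟨q, hq, he⟩ := fv_ren f a p hp
        exact ⟨q, Or.inl hq, he⟩
      · obtain ⟨q, hq, he⟩ := fv_ren f b p hp
        exact ⟨q, Or.inr hq, he⟩
  | _, .fst a, p, hp => fv_ren f a p hp
  | _, .snd a, p, hp => fv_ren f a p hp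

theorem Delta0.fv_ren {Γ Γ'} (f : Ren Γ Γ') :
    ∀ (φ : Delta0 Γ) (p : (s : NType) × Var Γ' s),
    p ∈ (φ.ren f).fv → ∃ q, q ∈ φ.fv ∧ p = ⟨q.1, f q.1 q.2⟩
  | .eqU a b, p, hp => by
      rcases hp with hp | hp
      · obtain ⟨q, hq, he⟩ := Tm.fv_ren f a p hp; exact ⟨q, Or.inl hq, he⟩
      · obtain ⟨q, hq, he⟩ := Tm.fv_ren f b p hp; exact ⟨q, Or.inr hq, he⟩
  | .neU a b, p, hp => by
      rcases hp with hp | hp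
      · obtain ⟨q, hq, he⟩ := Tm.fv_ren f a p hp; exact ⟨q, Or.inl hq, he⟩
      · obtain ⟨q, hq, he⟩ := Tm.fv_ren f b p hp; exact ⟨q, Or.inr hq, he⟩
  | .tru, p, hp => absurd hp (Set.notMem_empty p)
  | .fls, p, hp => absurd hp (Set.notMem_empty p)
  | .and φ ψ, p, hp => by
      rcases hp with hp | hp
      · obtain ⟨q, hq, he⟩ := fv_ren f φ p hp; exact ⟨q, Or.inl hq, he⟩
      · obtain ⟨q, hq, he⟩ := fv_ren f ψ p hp; exact ⟨q, Or.inr hq, he⟩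
  | .or φ ψ, p, hp => by
      rcases hp with hp | hp
      · obtain ⟨q, hq, he⟩ := fv_ren f φ p hp; exact ⟨q, Or.inl hq, he⟩
      · obtain ⟨q, hq, he⟩ := fv_ren f ψ p hp; exact ⟨q, Or.inr hq, he⟩
  | .all s φ, p, hp => by
      rcases hp with hp | hp
      · obtain ⟨q, hq, he⟩ := Tm.fv_ren f s p hp; exact ⟨q, Or.inl hq, he⟩
      · obtain ⟨⟨qt, qv⟩, hq, he⟩ := fv_ren f.lift φ _ hp
        obtain ⟨pt, pv⟩ := p
        cases qv with
        | zero =>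
          have := sigma_eq_idx he
          simp [Var.idx, Ren.lift] at this
        | succ w =>
          injection he with h1 h2
          subst h1
          have h3 := eq_of_heq h2
          have h4 : pv = f pt w := by
            injection h3
          exact ⟨⟨pt, w⟩, Or.inr hq, by rw [h4]⟩
  | .ex s φ, p, hp => by
      rcases hp with hp | hp
      · obtain ⟨q, hq, he⟩ := Tm.fv_ren f s p hp; exact ⟨q, Or.inl hq, he⟩
      · obtain ⟨⟨qt, qv⟩, hq, he⟩ := fv_ren f.lift φ _ hp
        obtain ⟨pt, pv⟩ := p
        cases qv with
        | zero =>
          have := sigma_eq_idx he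
          simp [Var.idx, Ren.lift] at this
        | succ w =>
          injection he with h1 h2
          subst h1
          have h3 := eq_of_heq h2
          have h4 : pv = f pt w := by
            injection h3
          exact ⟨⟨pt, w⟩, Or.inr hq, by rw [h4]⟩

theorem Delta0.fv_neg : ∀ {Γ} (φ : Delta0 Γ), φ.neg.fv ⊆ φ.fv
  | _, .eqU a b => le_refl _
  | _, .neU a b => le_refl _
  | _, .tru => le_refl _
  | _, .fls => le_refl _
  | _, .and φ ψ => Set.union_subset_union (fv_neg φ) (fv_neg ψ)
  | _, .or φ ψ => Set.union_subset_union (fv_neg φ) (fv_neg ψ)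
  | _, .all s φ => Set.union_subset_union (le_refl _)
      (fun p hp => fv_neg φ hp)
  | _, .ex s φ => Set.union_subset_union (le_refl _)
      (fun p hp => fv_neg φ hp)

theorem fv_eqT : ∀ (t : NType) {Γ} (a b : Tm Γ t), (eqT t a b).fv ⊆ a.fv ∪ b.fv
  | .U, _, a, b => le_refl _
  | .unit, _, a, b => Set.empty_subset _
  | .prod s t, _, a, b => by
      intro p hp
      rcases hp with hp | hp
      · exact fv_eqT s (.fst a) (.fst b) hp
      · exact fv_eqT t (.snd a) (.snd b) hp
  | .set t, Γ, a, b => by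
      intro p hp
      have inner : ∀ (c d : Tm Γ (.set t)) (p : (s : NType) × Var Γ s),
          p ∈ dropFv (Delta0.fv (.ex (d.ren fun _ v => .succ v)
            (eqT t (.var (.succ .zero)) (.var .zero)))) → p ∈ d.fv := by
        intro c d p hp
        rcases hp with hp | hp
        · obtain ⟨⟨qt, qv⟩, hq, he⟩ := Tm.fv_ren _ d _ hp
          obtain ⟨pt, pv⟩ := p
          injection he with h1 h2
          subst h1
          have h3 := eq_of_heq h2
          have h4 : pv = qv := by injection h3
          rw [h4]; exact hq
        · exfalso
          have := fv_eqT t (Γ := t :: t :: Γ) (.var (.succ .zero)) (.var .zero) hp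
          rcases this with h | h
          · have := sigma_eq_idx h; simp [Var.idx] at this
          · have := sigma_eq_idx h; simp [Var.idx] at this
      rcases hp with hp | hp
      · rcases hp with hp | hp
        · exact Or.inl hp
        · exact Or.inr (inner a b _ hp)
      · rcases hp with hp | hp
        · exact Or.inr hp
        · exact Or.inl (inner b a _ hp)

end Aux3
section Aux4

/-- Partial renamings between contexts. -/
def PRen (Γ Γ' : List NType) := ∀ t, Var Γ t → Option (Var Γ' t)

def PRen.lift {Γ Γ' : List NType} {a : NType} (f : PRen Γ Γ') : PRen (a :: Γ) (a :: Γ')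
  | _, .zero => some .zero
  | _, .succ v => (f _ v).map .succ

def Tm.pren {Γ Γ'} (f : PRen Γ Γ') : ∀ {t}, Tm Γ t → Option (Tm Γ' t)
  | _, .var v => (f _ v).map .var
  | _, .unit => some .unit
  | _, .pair a b => do return .pair (← a.pren f) (← b.pren f)
  | _, .fst p => do return .fst (← p.pren f)
  | _, .snd p => do return .snd (← p.pren f)

def Delta0.pren {Γ Γ'} (f : PRen Γ Γ') : Delta0 Γ → Option (Delta0 Γ')
  | .eqU a b => do return .eqU (← a.pren f) (← b.pren f)
  | .neU a b => do return .neU (← a.pren f) (← b.pren f)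
  | .tru => some .tru
  | .fls => some .fls
  | .and φ ψ => do return .and (← φ.pren f) (← ψ.pren f)
  | .or φ ψ => do return .or (← φ.pren f) (← ψ.pren f)
  | .all s φ => do return .all (← s.pren f) (← φ.pren f.lift)
  | .ex s φ => do return .ex (← s.pren f) (← φ.pren f.lift)

theorem Tm.pren_some {Γ Γ'} (f : PRen Γ Γ') : ∀ {t} (a : Tm Γ t),
    (∀ p ∈ a.fv, (f p.1 p.2).isSome) → ∃ b, a.pren f = some b
  | _, .var v, h => by
      obtain ⟨w, hw⟩ := Option.isSome_iff_exists.mp (h ⟨_, v⟩ rfl)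
      exact ⟨.var w, by simp [Tm.pren, hw]⟩
  | _, .unit, h => ⟨.unit, rfl⟩
  | _, .pair a b, h => by
      obtain ⟨a', ha⟩ := pren_some f a (fun p hp => h p (Or.inl hp))
      obtain ⟨b', hb⟩ := pren_some f b (fun p hp => h p (Or.inr hp))
      exact ⟨.pair a' b', by simp [Tm.pren, ha, hb]⟩
  | _, .fst a, h => by
      obtain ⟨a', ha⟩ := pren_some f a h
      exact ⟨.fst a', by simp [Tm.pren, ha]⟩
  | _, .snd a, h => by
      obtain ⟨a', ha⟩ := pren_some f a h
      exact ⟨.snd a', by simp [Tm.pren, ha]⟩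

theorem PRen.lift_some {Γ Γ' : List NType} {a : NType} (f : PRen Γ Γ')
    (φ : Delta0 (a :: Γ)) (h : ∀ p ∈ dropFv φ.fv, (f p.1 p.2).isSome) :
    ∀ p ∈ φ.fv, ((f.lift (a := a)) p.1 p.2).isSome := by
  rintro ⟨t, v⟩ hv
  cases v with
  | zero => rfl
  | succ w =>
    have := h ⟨t, w⟩ hv
    simp only [PRen.lift]
    rcases Option.isSome_iff_exists.mp this with ⟨u, hu⟩
    simp [hu]

theorem Delta0.pren_some {Γ Γ'} (f : PRen Γ Γ') : ∀ (φ : Delta0 Γ),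
    (∀ p ∈ φ.fv, (f p.1 p.2).isSome) → ∃ ψ, φ.pren f = some ψ
  | .eqU a b, h => by
      obtain ⟨a', ha⟩ := Tm.pren_some f a (fun p hp => h p (Or.inl hp))
      obtain ⟨b', hb⟩ := Tm.pren_some f b (fun p hp => h p (Or.inr hp))
      exact ⟨.eqU a' b', by simp [Delta0.pren, ha, hb]⟩
  | .neU a b, h => by
      obtain ⟨a', ha⟩ := Tm.pren_some f a (fun p hp => h p (Or.inl hp))
      obtain ⟨b', hb⟩ := Tm.pren_some f b (fun p hp => h p (Or.inr hp))
      exact ⟨.neU a' b', by simp [Delta0.pren, ha, hb]⟩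
  | .tru, h => ⟨.tru, rfl⟩
  | .fls, h => ⟨.fls, rfl⟩
  | .and φ ψ, h => by
      obtain ⟨φ', hφ⟩ := pren_some f φ (fun p hp => h p (Or.inl hp))
      obtain ⟨ψ', hψ⟩ := pren_some f ψ (fun p hp => h p (Or.inr hp))
      exact ⟨.and φ' ψ', by simp [Delta0.pren, hφ, hψ]⟩
  | .or φ ψ, h => by
      obtain ⟨φ', hφ⟩ := pren_some f φ (fun p hp => h p (Or.inl hp))
      obtain ⟨ψ', hψ⟩ := pren_some f ψ (fun p hp => h p (Or.inr hp))
      exact ⟨.or φ' ψ', by simp [Delta0.pren, hφ, hψ]⟩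
  | .all s φ, h => by
      obtain ⟨s', hs⟩ := Tm.pren_some f s (fun p hp => h p (Or.inl hp))
      obtain ⟨φ', hφ⟩ := pren_some f.lift φ
        (PRen.lift_some f φ (fun p hp => h p (Or.inr hp)))
      exact ⟨.all s' φ', by simp [Delta0.pren, hs, hφ]⟩
  | .ex s φ, h => by
      obtain ⟨s', hs⟩ := Tm.pren_some f s (fun p hp => h p (Or.inl hp))
      obtain ⟨φ', hφ⟩ := pren_some f.lift φ
        (PRen.lift_some f φ (fun p hp => h p (Or.inr hp)))
      exact ⟨.ex s' φ', by simp [Delta0.pren, hs, hφ]⟩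

/-- Compatibility of a pair of environments w.r.t. a partial renaming. -/
def PCompat {α Γ Γ'} (f : PRen Γ Γ') (ρ : Env α Γ) (ρ' : Env α Γ') : Prop :=
  ∀ t v w, f t v = some w → ρ' t w = ρ t v

theorem PCompat.lift {α Γ Γ'} {a : NType} {f : PRen Γ Γ'} {ρ : Env α Γ} {ρ' : Env α Γ'}
    (h : PCompat f ρ ρ') (x : Obj α a) :
    PCompat f.lift (Env.cons x ρ) (Env.cons x ρ') := by
  intro t v w hw
  cases v with
  | zero =>
    simp only [PRen.lift] at hw
    cases hw
    rfl
  | succ u =>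
    simp only [PRen.lift, Option.map_eq_some_iff] at hw
    obtain ⟨w', hw', rfl⟩ := hw
    exact h t u w' hw'

theorem Tm.pren_eval {α Γ Γ'} {f : PRen Γ Γ'} {ρ : Env α Γ} {ρ' : Env α Γ'}
    (hρ : PCompat f ρ ρ') : ∀ {t} {a : Tm Γ t} {b : Tm Γ' t},
    a.pren f = some b → b.eval ρ' = a.eval ρ
  | _, .var v, b, h => by
      simp only [Tm.pren, Option.map_eq_some_iff] at h
      obtain ⟨w, hw, rfl⟩ := h
      exact hρ _ v w hw
  | _, .unit, b, h => by cases h; rfl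
  | _, .pair a₁ a₂, b, h => by
      simp only [Tm.pren, bind, Option.bind_eq_some_iff] at h
      obtain ⟨b₁, h₁, h⟩ := h
      obtain ⟨b₂, h₂, h⟩ := h
      cases h
      simp [Tm.eval, pren_eval hρ h₁, pren_eval hρ h₂]; rfl
  | _, .fst a, b, h => by
      simp only [Tm.pren, bind, Option.bind_eq_some_iff] at h
      obtain ⟨b₁, h₁, h⟩ := h
      cases h
      simp [Tm.eval, pren_eval hρ h₁]
  | _, .snd a, b, h => by
      simp only [Tm.pren, bind, Option.bind_eq_some_iff] at h
      obtain ⟨b₁, h₁, h⟩ := h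
      cases h
      simp [Tm.eval, pren_eval hρ h₁]

theorem Delta0.pren_sat {α Γ Γ'} {f : PRen Γ Γ'} :
    ∀ {φ : Delta0 Γ} {φ' : Delta0 Γ'}, φ.pren f = some φ' →
    ∀ (ρ : Env α Γ) (ρ' : Env α Γ'), PCompat f ρ ρ' → (φ'.sat ρ' ↔ φ.sat ρ)
  | .eqU a b, φ', h, ρ, ρ', hρ => by
      simp only [pren, bind, Option.bind_eq_some_iff] at h
      obtain ⟨a', ha, h⟩ := h
      obtain ⟨b', hb, h⟩ := h
      cases h
      simp [sat, Tm.pren_eval hρ ha, Tm.pren_eval hρ hb]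
  | .neU a b, φ', h, ρ, ρ', hρ => by
      simp only [pren, bind, Option.bind_eq_some_iff] at h
      obtain ⟨a', ha, h⟩ := h
      obtain ⟨b', hb, h⟩ := h
      cases h
      simp [sat, Tm.pren_eval hρ ha, Tm.pren_eval hρ hb]
  | .tru, φ', h, ρ, ρ', hρ => by cases h; exact Iff.rfl
  | .fls, φ', h, ρ, ρ', hρ => by cases h; exact Iff.rfl
  | .and φ₁ φ₂, φ', h, ρ, ρ', hρ => by
      simp only [pren, bind, Option.bind_eq_some_iff] at h
      obtain ⟨a', ha, h⟩ := h
      obtain ⟨b', hb, h⟩ := h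
      cases h
      simp only [sat, pren_sat ha ρ ρ' hρ, pren_sat hb ρ ρ' hρ]
  | .or φ₁ φ₂, φ', h, ρ, ρ', hρ => by
      simp only [pren, bind, Option.bind_eq_some_iff] at h
      obtain ⟨a', ha, h⟩ := h
      obtain ⟨b', hb, h⟩ := h
      cases h
      simp only [sat, pren_sat ha ρ ρ' hρ, pren_sat hb ρ ρ' hρ]
  | .all s φ, φ', h, ρ, ρ', hρ => by
      simp only [pren, bind, Option.bind_eq_some_iff] at h
      obtain ⟨s', hs, h⟩ := h
      obtain ⟨ψ', hψ, h⟩ := h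
      cases h
      simp only [sat, Tm.pren_eval hρ hs]
      exact forall_congr' fun x => imp_congr Iff.rfl (pren_sat hψ _ _ (hρ.lift x))
  | .ex s φ, φ', h, ρ, ρ', hρ => by
      simp only [pren, bind, Option.bind_eq_some_iff] at h
      obtain ⟨s', hs, h⟩ := h
      obtain ⟨ψ', hψ, h⟩ := h
      cases h
      simp only [sat, Tm.pren_eval hρ hs]
      exact exists_congr fun x => and_congr Iff.rfl (pren_sat hψ _ _ (hρ.lift x))

end Aux4
section Aux5

def Obj.map {α β : Type} (f : α → β) : ∀ {t : NType}, Obj α t → Obj β t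
  | .U, x => f x
  | .unit, _ => ()
  | .prod a b, x =>
      ((Obj.map f (x : Obj α a × Obj α b).1, Obj.map f (x : Obj α a × Obj α b).2) :
        Obj β a × Obj β b)
  | .set a, S => show Set (Obj β a) from Obj.map f '' (S : Set (Obj α a))

theorem Obj.map_injective {α β : Type} {f : α → β} (hf : Function.Injective f) :
    ∀ {t : NType}, Function.Injective (Obj.map f (t := t))
  | .U => hf
  | .unit => fun _ _ _ => Subsingleton.elim (α := Unit) _ _
  | .prod a b => fun x y h => by
      have h1 := congrArg Prod.fst h
      have h2 := congrArg Prod.snd h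
      have e1 := Obj.map_injective hf (t := a) h1
      have e2 := Obj.map_injective hf (t := b) h2
      exact Prod.ext e1 e2
  | .set a => fun S S' h => Set.image_injective.mpr (Obj.map_injective hf (t := a)) h

def Env.map {α β : Type} (f : α → β) {Γ} (ρ : Env α Γ) : Env β Γ :=
  fun t v => Obj.map f (ρ t v)

theorem Env.map_cons {α β : Type} (f : α → β) {Γ} {a : NType} (x : Obj α a) (ρ : Env α Γ) :
    (Env.cons x ρ).map f = Env.cons (Obj.map f x) (ρ.map f) := by
  funext t v; cases v <;> rfl

theorem Tm.eval_map {α β : Type} (f : α → β) {Γ} (ρ : Env α Γ) : ∀ {t} (a : Tm Γ t),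
    a.eval (ρ.map f) = Obj.map f (a.eval ρ)
  | _, .var v => rfl
  | _, .unit => rfl
  | _, .pair a b => by
      simp only [Tm.eval, eval_map f ρ a, eval_map f ρ b]
      rfl
  | _, .fst p => by simp only [Tm.eval, eval_map f ρ p]; rfl
  | _, .snd p => by simp only [Tm.eval, eval_map f ρ p]; rfl

theorem Delta0.sat_map {α β : Type} {f : α → β} (hf : Function.Injective f) :
    ∀ {Γ} (ρ : Env α Γ) (φ : Delta0 Γ), φ.sat (ρ.map f) ↔ φ.sat ρ
  | _, ρ, .eqU a b => by
      simp only [sat, Tm.eval_map]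
      exact (Obj.map_injective hf).eq_iff
  | _, ρ, .neU a b => by
      simp only [sat, Tm.eval_map]
      exact not_congr (Obj.map_injective hf).eq_iff
  | _, ρ, .tru => Iff.rfl
  | _, ρ, .fls => Iff.rfl
  | _, ρ, .and φ ψ => by
      simp only [sat, sat_map hf ρ φ, sat_map hf ρ ψ]
  | _, ρ, .or φ ψ => by
      simp only [sat, sat_map hf ρ φ, sat_map hf ρ ψ]
  | _, ρ, .all s φ => by
      simp only [sat, Tm.eval_map]
      constructor
      · intro h y hy
        have := h (Obj.map f y) ⟨y, hy, rfl⟩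
        rw [← Env.map_cons, sat_map hf (Env.cons y ρ) φ] at this
        exact this
      · rintro h x ⟨y, hy, rfl⟩
        rw [← Env.map_cons, sat_map hf (Env.cons y ρ) φ]
        exact h y hy
  | _, ρ, .ex s φ => by
      simp only [sat, Tm.eval_map]
      constructor
      · rintro ⟨x, ⟨y, hy, rfl⟩, hs⟩
        rw [← Env.map_cons, sat_map hf (Env.cons y ρ) φ] at hs
        exact ⟨y, hy, hs⟩
      · rintro ⟨y, hy, hs⟩
        refine ⟨Obj.map f y, ⟨y, hy, rfl⟩, ?_⟩
        rw [← Env.map_cons, sat_map hf (Env.cons y ρ) φ]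
        exact hs

noncomputable def Obj.choose (β : Type) [h : Nonempty β] : ∀ t : NType, Obj β t
  | .U => Classical.choice h
  | .unit => ()
  | .prod a b => ((Obj.choose β a, Obj.choose β b) : Obj β a × Obj β b)
  | .set a => (∅ : Set (Obj β a))

theorem Env.eq3 {α} {a b c : NType} (ρ : Env α [a, b, c]) :
    ρ = Env.cons (ρ _ .zero) (Env.cons (ρ _ (.succ .zero))
      (Env.cons (ρ _ (.succ (.succ .zero))) Env.nil)) := by
  funext t v
  cases v with
  | zero => rfl
  | succ v =>
    cases v with
    | zero => rfl
    | succ v =>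
      cases v with
      | zero => rfl
      | succ v => cases v

end Aux5
section Maps
variable (Tin T A : NType)

def r1 : Ren [Tin, T, A] [Tin, T, T, A, A]
  | _, .zero => .zero
  | _, .succ .zero => .succ .zero
  | _, .succ (.succ .zero) => .succ (.succ (.succ .zero))
  | _, .succ (.succ (.succ v)) => nomatch v

def r2 : Ren [Tin, T, A] [Tin, T, T, A, A]
  | _, .zero => .zero
  | _, .succ .zero => .succ (.succ .zero)
  | _, .succ (.succ .zero) => .succ (.succ (.succ (.succ .zero)))
  | _, .succ (.succ (.succ v)) => nomatch v

def r3 : Ren [Tin, T, A] [Tin, T, A, T, T]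
  | _, .zero => .zero
  | _, .succ .zero => .succ .zero
  | _, .succ (.succ .zero) => .succ (.succ .zero)
  | _, .succ (.succ (.succ v)) => nomatch v

def g1 : Ren [Tin, T, T, A, A] [Tin, T, A, T, T]
  | _, .zero => .zero
  | _, .succ .zero => .succ (.succ (.succ .zero))
  | _, .succ (.succ .zero) => .succ .zero
  | _, .succ (.succ (.succ .zero)) => .succ (.succ .zero)
  | _, .succ (.succ (.succ (.succ .zero))) => .succ (.succ .zero)
  | _, .succ (.succ (.succ (.succ (.succ v)))) => nomatch v

def g2 : Ren [Tin, T, T, A, A] [Tin, T, A, T, T]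
  | _, .zero => .zero
  | _, .succ .zero => .succ (.succ (.succ (.succ .zero)))
  | _, .succ (.succ .zero) => .succ .zero
  | _, .succ (.succ (.succ .zero)) => .succ (.succ .zero)
  | _, .succ (.succ (.succ (.succ .zero))) => .succ (.succ .zero)
  | _, .succ (.succ (.succ (.succ (.succ v)))) => nomatch v

def f1 : PRen [Tin, T, T, A, A] [Tin, T]
  | _, .zero => some .zero
  | _, .succ .zero => some (.succ .zero)
  | _, .succ (.succ _) => none

def f2 : PRen [Tin, T, A, T, T] [Tin, T]
  | _, .zero => some .zero
  | _, .succ _ => none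

end Maps
/-- Dropping auxiliary parameters from implicit definitions: assuming
Craig interpolation for Δ₀ formulas (for classically valid entailments), if a Δ₀ formula
`Σ(o_in, o_out, a)` implicitly defines `o_out` as a function of `o_in`, then there is a
Δ₀ formula `Σ'(o_in, o_out)` with no auxiliary variable such that `Σ` entails `Σ'` and
`Σ'` implicitly defines `o_out` as a function of `o_in`. -/
theorem drop_auxiliary_parameters
    (interp : ∀ (Γ : List NType) (φ ψ : Delta0 Γ),
      (∀ (α : Type) (ρ : Env α Γ), Delta0.sat ρ φ → Delta0.sat ρ ψ) →
      ∃ θ : Delta0 Γ, Delta0.fv θ ⊆ Delta0.fv φ ∩ Delta0.fv ψ ∧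
        (∀ (α : Type) (ρ : Env α Γ), Delta0.sat ρ φ → Delta0.sat ρ θ) ∧
        (∀ (α : Type) (ρ : Env α Γ), Delta0.sat ρ θ → Delta0.sat ρ ψ))
    (Tin T A : NType) (Sg : Delta0 [Tin, T, A])
    (hfun : ∀ (α : Type) (oin : Obj α Tin) (o o' : Obj α T) (a a' : Obj α A),
      Delta0.sat (Env.cons oin (Env.cons o (Env.cons a Env.nil))) Sg →
      Delta0.sat (Env.cons oin (Env.cons o' (Env.cons a' Env.nil))) Sg → o = o') :
    ∃ Sg' : Delta0 [Tin, T],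
      (∀ (α : Type) (oin : Obj α Tin) (o : Obj α T) (a : Obj α A),
        Delta0.sat (Env.cons oin (Env.cons o (Env.cons a Env.nil))) Sg →
        Delta0.sat (Env.cons oin (Env.cons o Env.nil)) Sg') ∧
      (∀ (α : Type) (oin : Obj α Tin) (o o' : Obj α T),
        Delta0.sat (Env.cons oin (Env.cons o Env.nil)) Sg' →
        Delta0.sat (Env.cons oin (Env.cons o' Env.nil)) Sg' → o = o') := by
  classical
  -- First interpolation, in context [Tin, T, T, A, A]
  set φ1 : Delta0 [Tin, T, T, A, A] := Sg.ren (r1 Tin T A) with hφ1def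
  set ψ1 : Delta0 [Tin, T, T, A, A] :=
    Delta0.or (Delta0.neg (Sg.ren (r2 Tin T A)))
      (eqT T (.var (.succ .zero)) (.var (.succ (.succ .zero)))) with hψ1def
  have ent1 : ∀ (α : Type) (ρ : Env α [Tin, T, T, A, A]), φ1.sat ρ → ψ1.sat ρ := by
    intro α ρ h
    rw [hφ1def, Delta0.sat_ren, Env.eq3 (ρ.comp (r1 Tin T A))] at h
    show (Delta0.neg (Sg.ren (r2 Tin T A))).sat ρ ∨ _
    by_cases hs : (Sg.ren (r2 Tin T A)).sat ρ
    · right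
      rw [sat_eqT]
      rw [Delta0.sat_ren, Env.eq3 (ρ.comp (r2 Tin T A))] at hs
      exact hfun α _ _ _ _ _ h hs
    · exact Or.inl ((Delta0.sat_neg ρ _).mpr hs)
  obtain ⟨θ, hθfv, hφθ, hθψ⟩ := interp _ φ1 ψ1 ent1
  -- θ only mentions the variables o_in (index 0) and o_out (index 1)
  have hθ01 : ∀ p ∈ θ.fv, p = (⟨Tin, .zero⟩ : (s : NType) × Var [Tin, T, T, A, A] s) ∨
      p = (⟨T, .succ .zero⟩ : (s : NType) × Var [Tin, T, T, A, A] s) := by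
    intro p hp
    obtain ⟨h1, h2⟩ := hθfv hp
    obtain ⟨⟨qt, qv⟩, hq, rfl⟩ := Delta0.fv_ren (r1 Tin T A) Sg p h1
    cases qv with
    | zero => exact Or.inl rfl
    | succ qv =>
      cases qv with
      | zero => exact Or.inr rfl
      | succ qv =>
        cases qv with
        | succ qv => cases qv
        | zero =>
          exfalso
          rcases h2 with h | h
          · have h' := Delta0.fv_neg _ h
            obtain ⟨⟨q2, qv2⟩, _, he⟩ := Delta0.fv_ren (r2 Tin T A) Sg _ h'
            have hidx := sigma_eq_idx he
            cases qv2 with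
            | zero => simp [Var.idx, r1, r2] at hidx
            | succ qv2 =>
              cases qv2 with
              | zero => simp [Var.idx, r1, r2] at hidx
              | succ qv2 =>
                cases qv2 with
                | zero => simp [Var.idx, r1, r2] at hidx
                | succ qv2 => cases qv2
          · have h' := fv_eqT T _ _ h
            rcases h' with h' | h'
            · have hidx := sigma_eq_idx h'
              simp [Var.idx, r1] at hidx
            · have hidx := sigma_eq_idx h'
              simp [Var.idx, r1] at hidx
  have isSome1 : ∀ p ∈ θ.fv, ((f1 Tin T A) p.1 p.2).isSome := by
    intro p hp
    rcases hθ01 p hp with rfl | rfl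
    · rfl
    · rfl
  obtain ⟨θs, hθs⟩ := Delta0.pren_some (f1 Tin T A) θ isSome1
  -- Second interpolation, in context [Tin, T, A, T, T]
  set φ2 : Delta0 [Tin, T, A, T, T] := Sg.ren (r3 Tin T A) with hφ2def
  set ψ2 : Delta0 [Tin, T, A, T, T] :=
    Delta0.or (Delta0.neg (Delta0.and (θ.ren (g1 Tin T A)) (θ.ren (g2 Tin T A))))
      (eqT T (.var (.succ (.succ (.succ .zero))))
             (.var (.succ (.succ (.succ (.succ .zero)))))) with hψ2def
  have ent2 : ∀ (α : Type) (ρ : Env α [Tin, T, A, T, T]), φ2.sat ρ → ψ2.sat ρ := by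
    intro α ρ h
    rw [hφ2def, Delta0.sat_ren, Env.eq3 (ρ.comp (r3 Tin T A))] at h
    show (Delta0.neg _).sat ρ ∨ _
    by_cases hθ2 : (Delta0.and (θ.ren (g1 Tin T A)) (θ.ren (g2 Tin T A))).sat ρ
    · right
      rw [sat_eqT]
      obtain ⟨hg1, hg2⟩ := hθ2
      rw [Delta0.sat_ren] at hg1 hg2
      have hψa := hθψ α _ hg1
      have hψb := hθψ α _ hg2
      have key : ∀ (ρ5 : Env α [Tin, T, T, A, A]), ψ1.sat ρ5 →
          Delta0.sat (Env.cons (ρ5 _ .zero) (Env.cons (ρ5 _ (.succ (.succ .zero)))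
            (Env.cons (ρ5 _ (.succ (.succ (.succ (.succ .zero))))) Env.nil))) Sg →
          ρ5 _ (.succ .zero) = ρ5 _ (.succ (.succ .zero)) := by
        intro ρ5 hψ hSg2
        rcases hψ with hneg | heq
        · exfalso
          rw [Delta0.sat_neg] at hneg
          refine hneg ?_
          rw [Delta0.sat_ren, Env.eq3 (ρ5.comp (r2 Tin T A))]
          exact hSg2
        · rw [sat_eqT] at heq
          exact heq
      have e1 := key _ hψa h
      have e2 := key _ hψb h
      exact e1.trans e2.symm
    · exact Or.inl ((Delta0.sat_neg ρ _).mpr hθ2)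
  obtain ⟨D, hDfv, hφD, hDψ⟩ := interp _ φ2 ψ2 ent2
  -- D only mentions o_in (index 0)
  have hθg1 : ∀ p ∈ (θ.ren (g1 Tin T A)).fv,
      p = (⟨Tin, .zero⟩ : (s : NType) × Var [Tin, T, A, T, T] s) ∨
      p = (⟨T, .succ (.succ (.succ .zero))⟩ : (s : NType) × Var [Tin, T, A, T, T] s) := by
    intro p hp
    obtain ⟨⟨qt, qv⟩, hq, rfl⟩ := Delta0.fv_ren (g1 Tin T A) θ p hp
    rcases hθ01 _ hq with h | h
    · injection h with e1 e2
      subst e1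
      obtain rfl := eq_of_heq e2
      exact Or.inl rfl
    · injection h with e1 e2
      subst e1
      obtain rfl := eq_of_heq e2
      exact Or.inr rfl
  have hθg2 : ∀ p ∈ (θ.ren (g2 Tin T A)).fv,
      p = (⟨Tin, .zero⟩ : (s : NType) × Var [Tin, T, A, T, T] s) ∨
      p = (⟨T, .succ (.succ (.succ (.succ .zero)))⟩ :
        (s : NType) × Var [Tin, T, A, T, T] s) := by
    intro p hp
    obtain ⟨⟨qt, qv⟩, hq, rfl⟩ := Delta0.fv_ren (g2 Tin T A) θ p hp
    rcases hθ01 _ hq with h | h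
    · injection h with e1 e2
      subst e1
      obtain rfl := eq_of_heq e2
      exact Or.inl rfl
    · injection h with e1 e2
      subst e1
      obtain rfl := eq_of_heq e2
      exact Or.inr rfl
  have hD0 : ∀ p ∈ D.fv, p = (⟨Tin, .zero⟩ : (s : NType) × Var [Tin, T, A, T, T] s) := by
    intro p hp
    obtain ⟨h1, h2⟩ := hDfv hp
    obtain ⟨⟨qt, qv⟩, hq, rfl⟩ := Delta0.fv_ren (r3 Tin T A) Sg p h1
    have bad : ∀ (s : NType) (w : Var [Tin, T, A, T, T] s),
        (⟨s, w⟩ : (s : NType) × Var [Tin, T, A, T, T] s) ∈ ψ2.fv →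
        w.idx = 0 ∨ w.idx = 3 ∨ w.idx = 4 := by
      intro s w hw
      rcases hw with hw | hw
      · have hw' := Delta0.fv_neg _ hw
        rcases hw' with hw' | hw'
        · rcases hθg1 _ hw' with h | h
          · exact Or.inl (sigma_eq_idx h)
          · exact Or.inr (Or.inl (sigma_eq_idx h))
        · rcases hθg2 _ hw' with h | h
          · exact Or.inl (sigma_eq_idx h)
          · exact Or.inr (Or.inr (sigma_eq_idx h))
      · have hw' := fv_eqT T _ _ hw
        rcases hw' with hw' | hw'
        · exact Or.inr (Or.inl (sigma_eq_idx hw'))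
        · exact Or.inr (Or.inr (sigma_eq_idx hw'))
    cases qv with
    | zero => rfl
    | succ qv =>
      exfalso
      have hb := bad _ _ h2
      cases qv with
      | zero => simp [Var.idx, r3] at hb
      | succ qv =>
        cases qv with
        | zero => simp [Var.idx, r3] at hb
        | succ qv => cases qv
  have isSome2 : ∀ p ∈ D.fv, ((f2 Tin T A) p.1 p.2).isSome := by
    intro p hp
    rw [hD0 p hp]
    rfl
  obtain ⟨Ds, hDs⟩ := Delta0.pren_some (f2 Tin T A) D isSome2
  refine ⟨Delta0.and θs Ds, ?_, ?_⟩
  · -- Sg entails Sg'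
    intro α oin o a hSg
    set ρ5 : Env α [Tin, T, T, A, A] :=
      Env.cons oin (Env.cons o (Env.cons o (Env.cons a (Env.cons a Env.nil)))) with hρ5
    have hφ1s : φ1.sat ρ5 := by
      rw [hφ1def, Delta0.sat_ren, Env.eq3 (ρ5.comp (r1 Tin T A))]
      exact hSg
    have hθsat := hφθ α ρ5 hφ1s
    set ρg : Env α [Tin, T, A, T, T] :=
      Env.cons oin (Env.cons o (Env.cons a (Env.cons o (Env.cons o Env.nil)))) with hρg
    have hφ2s : φ2.sat ρg := by
      rw [hφ2def, Delta0.sat_ren, Env.eq3 (ρg.comp (r3 Tin T A))]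
      exact hSg
    have hDsat := hφD α ρg hφ2s
    constructor
    · refine (Delta0.pren_sat hθs ρ5 _ ?_).mpr hθsat
      intro t v w hw
      cases v with
      | zero => cases hw; rfl
      | succ v =>
        cases v with
        | zero => cases hw; rfl
        | succ v => cases hw
    · refine (Delta0.pren_sat hDs ρg _ ?_).mpr hDsat
      intro t v w hw
      cases v with
      | zero => cases hw; rfl
      | succ v => cases hw
  · -- Sg' is functional
    intro α oin o o' h1 h2
    have hinj : Function.Injective (fun x : α => (some x : Option α)) :=
      fun _ _ h => Option.some.inj h
    have h1' := (Delta0.sat_map hinj _ _).mpr h1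
    have h2' := (Delta0.sat_map hinj _ _).mpr h2
    rw [Env.map_cons, Env.map_cons] at h1' h2'
    have hnil : (Env.nil (α := α)).map (fun x : α => (some x : Option α)) = Env.nil := by
      funext t v; cases v
    rw [hnil] at h1' h2'
    set oinb := Obj.map (fun x : α => (some x : Option α)) oin with hoinb
    set ob := Obj.map (fun x : α => (some x : Option α)) o with hob
    set ob' := Obj.map (fun x : α => (some x : Option α)) o' with hob'
    obtain ⟨hθb, hDb⟩ := h1'
    obtain ⟨hθb', hDb'⟩ := h2'
    have : Nonempty (Option α) := ⟨none⟩
    set chA : Obj (Option α) A := Obj.choose (Option α) A with hchA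
    set ρB : Env (Option α) [Tin, T, A, T, T] :=
      Env.cons oinb (Env.cons ob (Env.cons chA (Env.cons ob (Env.cons ob' Env.nil)))) with hρB
    have hDB : D.sat ρB := by
      refine (Delta0.pren_sat hDs ρB _ ?_).mp hDb
      intro t v w hw
      cases v with
      | zero => cases hw; rfl
      | succ v => cases hw
    have hψ2B := hDψ _ ρB hDB
    have hθ1B : (θ.ren (g1 Tin T A)).sat ρB := by
      rw [Delta0.sat_ren]
      refine (Delta0.pren_sat hθs (ρB.comp (g1 Tin T A)) _ ?_).mp hθb
      intro t v w hw
      cases v with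
      | zero => cases hw; rfl
      | succ v =>
        cases v with
        | zero => cases hw; rfl
        | succ v => cases hw
    have hθ2B : (θ.ren (g2 Tin T A)).sat ρB := by
      rw [Delta0.sat_ren]
      refine (Delta0.pren_sat hθs (ρB.comp (g2 Tin T A)) _ ?_).mp hθb'
      intro t v w hw
      cases v with
      | zero => cases hw; rfl
      | succ v =>
        cases v with
        | zero => cases hw; rfl
        | succ v => cases hw
    rcases hψ2B with hneg | heq
    · exfalso
      rw [Delta0.sat_neg] at hneg
      exact hneg ⟨hθ1B, hθ2B⟩
    · rw [sat_eqT] at heq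
      exact Obj.map_injective hinj heq
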